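/- Let τ > 0 and let v ∈ C²(ℝ) be 2π-periodic and positive with v''(θ) + v(θ) = τ·v(θ)^{-3} for all θ. Then there exist λ > 0 and α ∈ [0, 2π) such that v(θ) = τ^{1/4}·√( λ²cos²(θ−α) + λ^{-2}sin²(θ−α) ) for all θ. -/

import Mathlib

open Real Set

/-- Classification of the positive `2π`-periodic solutions of `v'' + v = τ·v⁻³`
(the steady states in Theorem 1 of the paper). -/
theorem ode_classification_circle
    (τ : ℝ) (hτ : 0 < τ) (v : ℝ → ℝ) (hv : ContDiff ℝ 2 v)
    (hper : ∀ θ : ℝ, v (θ + 2 * π) = v θ)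
    (hpos : ∀ θ, 0 < v θ)
    (hode : ∀ θ, iteratedDeriv 2 v θ + v θ = τ * (v θ) ^ (-3 : ℤ)) :
    ∃ l > (0:ℝ), ∃ α ∈ Ico (0:ℝ) (2 * π), ∀ θ : ℝ,
      v θ = τ ^ ((1 : ℝ)/4) *
        Real.sqrt (l ^ 2 * Real.cos (θ - α) ^ 2 + l ^ (-2 : ℤ) * Real.sin (θ - α) ^ 2) := by
  have hvne : ∀ θ, v θ ≠ 0 := fun θ => (hpos θ).ne'
  have hd1 : Differentiable ℝ v := hv.differentiable (by norm_num)
  have hd2 : Differentiable ℝ (deriv v) := by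
    have h := (contDiff_succ_iff_deriv.mp (by exact_mod_cast hv : ContDiff ℝ ((1:ℕ)+1) v)).2.2
    exact h.differentiable (by norm_num)
  have hode' : ∀ θ, deriv (deriv v) θ = τ / v θ ^ 3 - v θ := by
    intro θ
    have h := hode θ
    rw [iteratedDeriv_succ, iteratedDeriv_one] at h
    have h3 : (v θ) ^ (-3:ℤ) = (v θ ^ 3)⁻¹ := by
      rw [zpow_neg]; norm_cast
    rw [h3, ← div_eq_mul_inv] at h
    linarith
  -- the conserved energy
  have hede : ∀ θ, HasDerivAt (fun θ => (deriv v θ)^2 + (v θ)^2 + τ / (v θ)^2) 0 θ := by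
    intro θ
    have hv' : HasDerivAt v (deriv v θ) θ := (hd1 θ).hasDerivAt
    have hv'' : HasDerivAt (deriv v) (deriv (deriv v) θ) θ := (hd2 θ).hasDerivAt
    have h1 := hv''.pow 2
    have h2 := hv'.pow 2
    have h3 := (hasDerivAt_const θ τ).div (hv'.pow 2) (pow_ne_zero 2 (hvne θ))
    have h := (h1.add h2).add h3
    refine h.congr_deriv ?_
    symm
    rw [hode' θ]
    simp only [Pi.pow_apply]
    have := hvne θ
    field_simp
    ring
  have hediff : Differentiable ℝ (fun θ => (deriv v θ)^2 + (v θ)^2 + τ / (v θ)^2) :=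
    fun θ => ((hede θ).differentiableAt)
  obtain ⟨E, hE⟩ : ∃ E : ℝ, ∀ θ, (deriv v θ)^2 + (v θ)^2 + τ / (v θ)^2 = E :=
    ⟨_, fun θ => is_const_of_deriv_eq_zero hediff (fun x => (hede x).deriv) θ 0⟩
  have hEpos : 0 < E := by
    have h0 := hpos 0
    have h1 : 0 < τ / (v 0)^2 := div_pos hτ (by positivity)
    have h2 := hE 0
    nlinarith [sq_nonneg (deriv v 0)]
  -- u = v², w = u - E/2
  have hw : ∀ θ, HasDerivAt (fun θ => (v θ)^2 - E/2) (2 * v θ * deriv v θ) θ := by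
    intro θ
    have hv' : HasDerivAt v (deriv v θ) θ := (hd1 θ).hasDerivAt
    have := (hv'.pow 2).sub_const (E/2)
    refine this.congr_deriv ?_
    symm
    push_cast
    ring
  have hp : ∀ θ, HasDerivAt (fun θ => 2 * v θ * deriv v θ) (-4 * ((v θ)^2 - E/2)) θ := by
    intro θ
    have hv' : HasDerivAt v (deriv v θ) θ := (hd1 θ).hasDerivAt
    have hv'' : HasDerivAt (deriv v) (deriv (deriv v) θ) θ := (hd2 θ).hasDerivAt
    have h := ((hv'.const_mul 2).mul hv'')
    refine h.congr_deriv ?_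
    symm
    rw [hode' θ]
    have hEθ := hE θ
    have hne := hvne θ
    have h4 : v θ * (τ / v θ ^ 3) = τ / v θ ^ 2 := by
      field_simp
    linear_combination (-2 : ℝ) * hEθ + (-2 : ℝ) * h4
  -- constants of motion for the linear ODE w'' = -4w
  have hc : ∀ θ : ℝ, HasDerivAt (fun θ => Real.cos (2*θ)) (-Real.sin (2*θ) * 2) θ := by
    intro θ
    simpa using (((hasDerivAt_id θ).const_mul 2).cos)
  have hs : ∀ θ : ℝ, HasDerivAt (fun θ => Real.sin (2*θ)) (Real.cos (2*θ) * 2) θ := by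
    intro θ
    simpa using (((hasDerivAt_id θ).const_mul 2).sin)
  have hA : ∀ θ, HasDerivAt
      (fun θ => ((v θ)^2 - E/2) * Real.cos (2*θ) - (2 * v θ * deriv v θ / 2) * Real.sin (2*θ)) 0 θ := by
    intro θ
    have h := ((hw θ).mul (hc θ)).sub (((hp θ).div_const 2).mul (hs θ))
    refine h.congr_deriv ?_
    symm
    ring
  have hB : ∀ θ, HasDerivAt
      (fun θ => ((v θ)^2 - E/2) * Real.sin (2*θ) + (2 * v θ * deriv v θ / 2) * Real.cos (2*θ)) 0 θ := by
    intro θ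
    have h := ((hw θ).mul (hs θ)).add (((hp θ).div_const 2).mul (hc θ))
    refine h.congr_deriv ?_
    symm
    ring
  obtain ⟨a, ha_def⟩ : ∃ a : ℝ, a = (v 0)^2 - E/2 := ⟨_, rfl⟩
  obtain ⟨b, hb_def⟩ : ∃ b : ℝ, b = v 0 * deriv v 0 := ⟨_, rfl⟩
  have hAc : ∀ θ, ((v θ)^2 - E/2) * Real.cos (2*θ) - (2 * v θ * deriv v θ / 2) * Real.sin (2*θ) = a := by
    intro θ
    have h := is_const_of_deriv_eq_zero (fun x => (hA x).differentiableAt)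
      (fun x => (hA x).deriv) θ 0
    simp only [mul_zero, Real.cos_zero, Real.sin_zero, mul_one, sub_zero] at h
    rw [h, ha_def]
  have hBc : ∀ θ, ((v θ)^2 - E/2) * Real.sin (2*θ) + (2 * v θ * deriv v θ / 2) * Real.cos (2*θ) = b := by
    intro θ
    have h := is_const_of_deriv_eq_zero (fun x => (hB x).differentiableAt)
      (fun x => (hB x).deriv) θ 0
    simp only [mul_zero, Real.cos_zero, Real.sin_zero, mul_one, mul_zero, zero_add] at h
    rw [h, hb_def]
    ring
  have hwform : ∀ θ, (v θ)^2 - E/2 = a * Real.cos (2*θ) + b * Real.sin (2*θ) := by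
    intro θ
    have h1 := hAc θ
    have h2 := hBc θ
    have hpy := Real.sin_sq_add_cos_sq (2*θ)
    linear_combination Real.cos (2*θ) * h1 + Real.sin (2*θ) * h2 - ((v θ)^2 - E/2) * hpy
  -- the invariant
  have hinv : a^2 + b^2 = (E/2)^2 - τ := by
    have h0 := hE 0
    have hne := hvne 0
    field_simp at h0
    rw [ha_def, hb_def]
    linear_combination h0
  obtain ⟨R, hR_def⟩ : ∃ R : ℝ, R = Real.sqrt (a^2 + b^2) := ⟨_, rfl⟩
  have hRnn : 0 ≤ R := hR_def ▸ Real.sqrt_nonneg _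
  have hR2 : R^2 = (E/2)^2 - τ := by
    rw [hR_def, Real.sq_sqrt (by positivity)]
    exact hinv
  have hRlt : R < E/2 := by
    by_contra h
    push_neg at h
    have h2 : (E/2)^2 ≤ R^2 := pow_le_pow_left₀ (by linarith) h 2
    rw [hR2] at h2
    linarith
  -- choose α
  obtain ⟨α, hαmem, hαcos, hαsin⟩ :
      ∃ α ∈ Ico (0:ℝ) (2*π), a = R * Real.cos (2*α) ∧ b = R * Real.sin (2*α) := by
    by_cases hab : a = 0 ∧ b = 0
    · refine ⟨0, ⟨le_refl _, by positivity⟩, ?_, ?_⟩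
      · simp [hab.1, hab.2, hR_def]
      · simp [hab.2]
    · have habpos : 0 < a^2 + b^2 := by
        rcases not_and_or.mp hab with h | h
        · positivity
        · positivity
      have hRpos : 0 < R := hR_def ▸ Real.sqrt_pos.mpr habpos
      have hz : (a + b * Complex.I : ℂ) ≠ 0 := by
        intro h
        apply hab
        constructor
        · simpa using congrArg Complex.re h
        · simpa using congrArg Complex.im h
      obtain ⟨φ, hφ_def⟩ : ∃ φ : ℝ, φ = (a + b * Complex.I : ℂ).arg := ⟨_, rfl⟩
      have habs : ‖(a + b * Complex.I : ℂ)‖ = R := by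
        rw [Complex.norm_add_mul_I, hR_def]
      have hcosφ : Real.cos φ = a / R := by
        rw [hφ_def, Complex.cos_arg hz, habs]; simp
      have hsinφ : Real.sin φ = b / R := by
        rw [hφ_def, Complex.sin_arg, habs]; simp
      have hφle : φ ≤ π := hφ_def ▸ Complex.arg_le_pi _
      have hφgt : -π < φ := hφ_def ▸ Complex.neg_pi_lt_arg _
      have hπ := Real.pi_pos
      by_cases hφ0 : 0 ≤ φ
      · refine ⟨φ/2, ⟨by linarith, by linarith⟩, ?_, ?_⟩
        · rw [show 2*(φ/2) = φ by ring, hcosφ]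
          field_simp
        · rw [show 2*(φ/2) = φ by ring, hsinφ]
          field_simp
      · push_neg at hφ0
        refine ⟨φ/2 + π, ⟨by linarith, by linarith⟩, ?_, ?_⟩
        · rw [show 2*(φ/2 + π) = φ + 2*π by ring, Real.cos_add_two_pi, hcosφ]
          field_simp
        · rw [show 2*(φ/2 + π) = φ + 2*π by ring, Real.sin_add_two_pi, hsinφ]
          field_simp
  have hsτ : 0 < Real.sqrt τ := Real.sqrt_pos.mpr hτ
  have hERpos : 0 < E/2 + R := by linarith
  obtain ⟨l, hl_def⟩ : ∃ l : ℝ, l = Real.sqrt ((E/2 + R)/Real.sqrt τ) := ⟨_, rfl⟩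
  have hlpos : 0 < l := hl_def ▸ Real.sqrt_pos.mpr (div_pos hERpos hsτ)
  have hl2 : l^2 = (E/2 + R)/Real.sqrt τ := by
    rw [hl_def]; exact Real.sq_sqrt (le_of_lt (div_pos hERpos hsτ))
  refine ⟨l, hlpos, α, hαmem, ?_⟩
  intro θ
  have hτs : Real.sqrt τ * Real.sqrt τ = τ := Real.mul_self_sqrt hτ.le
  have hlm2 : (l:ℝ)^(-2:ℤ) = (E/2 - R)/Real.sqrt τ := by
    have h1 : (l:ℝ)^(-2:ℤ) = (l^2)⁻¹ := by
      rw [zpow_neg]; norm_cast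
    rw [h1, hl2, inv_div, div_eq_div_iff hERpos.ne' hsτ.ne']
    linear_combination hτs + hR2
  have hX : Real.sqrt τ * (l^2 * Real.cos (θ-α)^2 + l^(-2:ℤ) * Real.sin (θ-α)^2) = (v θ)^2 := by
    rw [hl2, hlm2]
    have h1 : Real.cos (2*(θ-α)) = 2 * Real.cos (θ-α)^2 - 1 := Real.cos_two_mul _
    have hexp : Real.cos (2*(θ-α)) = Real.cos (2*θ)*Real.cos (2*α) + Real.sin (2*θ)*Real.sin (2*α) := by
      rw [show 2*(θ-α) = 2*θ - 2*α by ring, Real.cos_sub]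
    have hpy := Real.sin_sq_add_cos_sq (θ-α)
    have hwθ := hwform θ
    have key : (E/2 + R) * Real.cos (θ-α)^2 + (E/2 - R) * Real.sin (θ-α)^2 = (v θ)^2 := by
      linear_combination (E/2 - R) * hpy - R * h1 + R * hexp - Real.cos (2*θ) * hαcos
        - Real.sin (2*θ) * hαsin - hwθ
    rw [div_mul_eq_mul_div, div_mul_eq_mul_div, ← add_div, ← mul_div_assoc,
      mul_div_cancel_left₀ _ hsτ.ne']
    exact key
  have h14 : τ ^ ((1:ℝ)/4) = Real.sqrt (Real.sqrt τ) := by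
    rw [Real.sqrt_eq_rpow, Real.sqrt_eq_rpow, ← Real.rpow_mul hτ.le]
    norm_num
  rw [h14, ← Real.sqrt_mul (Real.sqrt_nonneg τ), hX, Real.sqrt_sq (hpos θ).le]
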